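/- Small-ε expansion of the fourth moment: for every natural number N ≥ 1, the fourth moment m₄(N), regarded as a function of ε, is a polynomial in ε, and there exists a polynomial function R : ℝ → ℝ such that m₄(N) = N(3N−2) + 4N(N−1)(3N−4)·ε + (4/3)·N(N−1)(N−2)(21N−43)·ε² + ε³·R(ε) for all ε ∈ ℝ. -/

import Mathlib

/-- The discrete stochastic process with memory: binomial transfer probabilities
with coupling `ε`. -/
noncomputable def P (ε : ℝ) : ℕ → ℤ → ℝ
  | 0, x => if x = 0 then 1 else 0
  | n + 1, x =>
      P ε n (x + 1) * (1 / 2 - ((x : ℝ) + 1) * ε) +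
      P ε n (x - 1) * (1 / 2 + ((x : ℝ) - 1) * ε)

/-- The `k`-th moment `m_k(n; ε) = Σ_{x ∈ ℤ} x^k · P(n, x)` (depending on `ε` through `P`). -/
noncomputable def m (ε : ℝ) (k n : ℕ) : ℝ := ∑' x : ℤ, (x : ℝ) ^ k * P ε n x

lemma P_supp (ε : ℝ) : ∀ (n : ℕ) (x : ℤ), n < x.natAbs → P ε n x = 0 := by
  intro n
  induction n with
  | zero => intro x h; simp only [P]; rw [if_neg (by omega)]
  | succ n ih =>
      intro x h
      simp only [P]
      rw [ih _ (by omega), ih _ (by omega)]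
      ring

lemma summable_P_mul (ε : ℝ) (n : ℕ) (f : ℤ → ℝ) :
    Summable fun x : ℤ => P ε n x * f x := by
  apply summable_of_ne_finset_zero (s := Finset.Icc (-(n : ℤ)) n)
  intro x hx
  rw [P_supp ε n x (by simp [Finset.mem_Icc] at hx; omega), zero_mul]

lemma m_rec (ε : ℝ) (k n : ℕ) :
    m ε k (n + 1) =
      ∑' y : ℤ, P ε n y *
        (((y : ℝ) - 1) ^ k * (1 / 2 - (y : ℝ) * ε) +
         ((y : ℝ) + 1) ^ k * (1 / 2 + (y : ℝ) * ε)) := by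
  set g1 : ℤ → ℝ := fun y => P ε n y * (((y : ℝ) - 1) ^ k * (1 / 2 - (y : ℝ) * ε)) with hg1
  set g2 : ℤ → ℝ := fun y => P ε n y * (((y : ℝ) + 1) ^ k * (1 / 2 + (y : ℝ) * ε)) with hg2
  have hs1 : Summable g1 := summable_P_mul ε n _
  have hs2 : Summable g2 := summable_P_mul ε n _
  have key : ∀ x : ℤ, (x : ℝ) ^ k * P ε (n + 1) x = g1 (x + 1) + g2 (x - 1) := by
    intro x
    simp only [hg1, hg2, P]
    push_cast
    ring
  have hs1' : Summable fun x : ℤ => g1 (x + 1) :=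
    ((Equiv.addRight (1 : ℤ)).summable_iff (f := g1)).mpr hs1
  have hs2' : Summable fun x : ℤ => g2 (x - 1) :=
    ((Equiv.subRight (1 : ℤ)).summable_iff (f := g2)).mpr hs2
  calc m ε k (n + 1) = ∑' x : ℤ, (g1 (x + 1) + g2 (x - 1)) := tsum_congr key
    _ = (∑' x : ℤ, g1 (x + 1)) + ∑' x : ℤ, g2 (x - 1) := Summable.tsum_add hs1' hs2'
    _ = (∑' y : ℤ, g1 y) + ∑' y : ℤ, g2 y :=
        congrArg₂ (· + ·) ((Equiv.addRight (1 : ℤ)).tsum_eq g1)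
          ((Equiv.subRight (1 : ℤ)).tsum_eq g2)
    _ = ∑' y : ℤ, (g1 y + g2 y) := (Summable.tsum_add hs1 hs2).symm
    _ = _ := tsum_congr fun y => by rw [hg1, hg2]; ring

lemma m_zero (ε : ℝ) : ∀ n : ℕ, m ε 0 n = 1 := by
  intro n
  induction n with
  | zero =>
      have : ∀ x : ℤ, (x : ℝ) ^ 0 * P ε 0 x = if x = 0 then (1 : ℝ) else 0 := by
        intro x; simp [P]
      rw [m, tsum_congr this]; exact tsum_ite_eq (0 : ℤ) (fun _ => (1 : ℝ))
  | succ n ih =>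
      rw [m_rec]
      have : ∀ y : ℤ, P ε n y *
          (((y : ℝ) - 1) ^ 0 * (1 / 2 - (y : ℝ) * ε) +
           ((y : ℝ) + 1) ^ 0 * (1 / 2 + (y : ℝ) * ε)) = (y : ℝ) ^ 0 * P ε n y := by
        intro y; ring
      rw [tsum_congr this]
      exact ih

lemma m_two_rec (ε : ℝ) (n : ℕ) : m ε 2 (n + 1) = (1 + 4 * ε) * m ε 2 n + 1 := by
  rw [m_rec]
  have key : ∀ y : ℤ, P ε n y *
      (((y : ℝ) - 1) ^ 2 * (1 / 2 - (y : ℝ) * ε) +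
       ((y : ℝ) + 1) ^ 2 * (1 / 2 + (y : ℝ) * ε)) =
      (1 + 4 * ε) * ((y : ℝ) ^ 2 * P ε n y) + (y : ℝ) ^ 0 * P ε n y := by
    intro y; ring
  have hs2 : Summable fun y : ℤ => (1 + 4 * ε) * ((y : ℝ) ^ 2 * P ε n y) :=
    Summable.mul_left _
      ((summable_P_mul ε n fun y => (y : ℝ) ^ 2).congr fun y => mul_comm _ _)
  have hs0 : Summable fun y : ℤ => (y : ℝ) ^ 0 * P ε n y :=
    (summable_P_mul ε n fun y => (y : ℝ) ^ 0).congr fun y => mul_comm _ _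
  rw [tsum_congr key, Summable.tsum_add hs2 hs0, tsum_mul_left]
  rw [show (∑' y : ℤ, (y : ℝ) ^ 2 * P ε n y) = m ε 2 n from rfl,
    show (∑' y : ℤ, (y : ℝ) ^ 0 * P ε n y) = m ε 0 n from rfl, m_zero]

lemma m_four_rec (ε : ℝ) (n : ℕ) :
    m ε 4 (n + 1) = (1 + 8 * ε) * m ε 4 n + (6 + 8 * ε) * m ε 2 n + 1 := by
  rw [m_rec]
  have key : ∀ y : ℤ, P ε n y *
      (((y : ℝ) - 1) ^ 4 * (1 / 2 - (y : ℝ) * ε) +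
       ((y : ℝ) + 1) ^ 4 * (1 / 2 + (y : ℝ) * ε)) =
      (1 + 8 * ε) * ((y : ℝ) ^ 4 * P ε n y) +
        ((6 + 8 * ε) * ((y : ℝ) ^ 2 * P ε n y) + (y : ℝ) ^ 0 * P ε n y) := by
    intro y; ring
  have hs4 : Summable fun y : ℤ => (1 + 8 * ε) * ((y : ℝ) ^ 4 * P ε n y) :=
    Summable.mul_left _
      ((summable_P_mul ε n fun y => (y : ℝ) ^ 4).congr fun y => mul_comm _ _)
  have hs2 : Summable fun y : ℤ => (6 + 8 * ε) * ((y : ℝ) ^ 2 * P ε n y) :=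
    Summable.mul_left _
      ((summable_P_mul ε n fun y => (y : ℝ) ^ 2).congr fun y => mul_comm _ _)
  have hs0 : Summable fun y : ℤ => (y : ℝ) ^ 0 * P ε n y :=
    (summable_P_mul ε n fun y => (y : ℝ) ^ 0).congr fun y => mul_comm _ _
  rw [tsum_congr key, Summable.tsum_add hs4 (hs2.add hs0), Summable.tsum_add hs2 hs0,
    tsum_mul_left, tsum_mul_left]
  rw [show (∑' y : ℤ, (y : ℝ) ^ 4 * P ε n y) = m ε 4 n from rfl,
    show (∑' y : ℤ, (y : ℝ) ^ 2 * P ε n y) = m ε 2 n from rfl,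
    show (∑' y : ℤ, (y : ℝ) ^ 0 * P ε n y) = m ε 0 n from rfl, m_zero]
  ring

lemma m_base (ε : ℝ) (k : ℕ) (hk : 1 ≤ k) : m ε k 0 = 0 := by
  have : ∀ x : ℤ, (x : ℝ) ^ k * P ε 0 x = 0 := by
    intro x
    simp only [P]
    split
    · next h => subst h; simp [zero_pow (by omega : k ≠ 0)]
    · simp
  rw [m, tsum_congr this, tsum_zero]

open Polynomial in
lemma moments_expansion (n : ℕ) :
    ∃ R2 R4 : Polynomial ℝ, ∀ ε : ℝ,
      m ε 2 n = (n : ℝ) + 2 * (n : ℝ) * ((n : ℝ) - 1) * ε +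
          (8 / 3) * (n : ℝ) * ((n : ℝ) - 1) * ((n : ℝ) - 2) * ε ^ 2 + ε ^ 3 * R2.eval ε ∧
      m ε 4 n = (n : ℝ) * (3 * (n : ℝ) - 2) +
          4 * (n : ℝ) * ((n : ℝ) - 1) * (3 * (n : ℝ) - 4) * ε +
          (4 / 3) * (n : ℝ) * ((n : ℝ) - 1) * ((n : ℝ) - 2) * (21 * (n : ℝ) - 43) * ε ^ 2 +
          ε ^ 3 * R4.eval ε := by
  induction n with
  | zero =>
      refine ⟨0, 0, fun ε => ?_⟩
      constructor <;> · rw [m_base ε _ (by omega)]; simp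
  | succ n ih =>
      obtain ⟨R2, R4, h⟩ := ih
      refine ⟨(1 + 4 * X) * R2 + C (4 * ((8 / 3) * (n : ℝ) * ((n : ℝ) - 1) * ((n : ℝ) - 2))),
        (1 + 8 * X) * R4 + (6 + 8 * X) * R2 +
          C (8 * ((4 / 3) * (n : ℝ) * ((n : ℝ) - 1) * ((n : ℝ) - 2) * (21 * (n : ℝ) - 43)) +
             8 * ((8 / 3) * (n : ℝ) * ((n : ℝ) - 1) * ((n : ℝ) - 2))), fun ε => ?_⟩
      obtain ⟨h2, h4⟩ := h ε
      constructor
      · rw [m_two_rec, h2]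
        simp only [eval_add, eval_mul, eval_C, eval_X, eval_one, eval_ofNat]
        push_cast
        ring
      · rw [m_four_rec, h2, h4]
        simp only [eval_add, eval_mul, eval_C, eval_X, eval_one, eval_ofNat]
        push_cast
        ring

/-- small-`ε` expansion of the fourth moment. For `N ≥ 1`, `m₄(N)` is a
polynomial in `ε`:
`m₄(N) = N(3N−2) + 4N(N−1)(3N−4)·ε + (4/3)·N(N−1)(N−2)(21N−43)·ε² + ε³·R(ε)`
with `R` a polynomial. -/
theorem fourth_moment_small_eps_expansion (N : ℕ) (hN : 1 ≤ N) :
    ∃ R : Polynomial ℝ, ∀ ε : ℝ,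
      m ε 4 N =
        (N : ℝ) * (3 * (N : ℝ) - 2) +
          4 * (N : ℝ) * ((N : ℝ) - 1) * (3 * (N : ℝ) - 4) * ε +
          (4 / 3) * (N : ℝ) * ((N : ℝ) - 1) * ((N : ℝ) - 2) * (21 * (N : ℝ) - 43) * ε ^ 2 +
          ε ^ 3 * R.eval ε := by
  obtain ⟨R2, R4, h⟩ := moments_expansion N
  exact ⟨R4, fun ε => (h ε).2⟩
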